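/- Let ℓ be a prime and ζ_ℓ = e^{2πi/ℓ}. In the ring of formal power series ℂ⟦t⟧ one has the identity t · Σ_{a=1}^{ℓ−1} ζ_ℓ^a · (ζ_ℓ^a − e^t)^{−1} = Σ_{n≥1} (1 − ℓ^n) B_n t^n/n!, where e^t denotes the formal exponential power series Σ_{k≥0} t^k/k!, and each factor ζ_ℓ^a − e^t is invertible in ℂ⟦t⟧ because its constant term ζ_ℓ^a − 1 is nonzero. -/

import Mathlib

open PowerSeries

/-- For a prime `ℓ` and `ζ_ℓ = e^{2πi/ℓ}`, in `ℂ⟦t⟧` each `ζ_ℓ^a - e^t` (for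
`1 ≤ a ≤ ℓ-1`) has nonzero constant term (hence is invertible), and
`t ⬝ Σ_{a=1}^{ℓ-1} ζ_ℓ^a (ζ_ℓ^a - e^t)⁻¹ = Σ_{n≥1} (1 - ℓ^n) B_n t^n / n!`. -/
theorem genocchi_generating_function (ℓ : ℕ) (hℓ : ℓ.Prime) :
    (∀ a ∈ Finset.Icc 1 (ℓ - 1),
      PowerSeries.constantCoeff
        (PowerSeries.C (Complex.exp (2 * Real.pi * Complex.I / ℓ) ^ a)
          - PowerSeries.exp ℂ) ≠ 0) ∧
    (PowerSeries.X : PowerSeries ℂ) *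
      ∑ a ∈ Finset.Icc 1 (ℓ - 1),
        PowerSeries.C (Complex.exp (2 * Real.pi * Complex.I / ℓ) ^ a) *
          (PowerSeries.C (Complex.exp (2 * Real.pi * Complex.I / ℓ) ^ a)
            - PowerSeries.exp ℂ)⁻¹
      = PowerSeries.mk
          (fun n => (1 - (ℓ : ℂ) ^ n) * ((bernoulli n : ℚ) : ℂ) / n.factorial) := by
  have hℓ0 : ℓ ≠ 0 := hℓ.pos.ne'
  set ζ : ℂ := Complex.exp (2 * Real.pi * Complex.I / ℓ) with hζdef
  have hζ : IsPrimitiveRoot ζ ℓ := Complex.isPrimitiveRoot_exp ℓ hℓ0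
  set E : PowerSeries ℂ := PowerSeries.exp ℂ with hE
  -- Part 1: nonzero constant coefficients
  have hnz : ∀ a ∈ Finset.Icc 1 (ℓ - 1),
      PowerSeries.constantCoeff (PowerSeries.C (ζ ^ a) - E) ≠ 0 := by
    intro a ha
    obtain ⟨h1, h2⟩ := Finset.mem_Icc.mp ha
    have : ζ ^ a ≠ 1 :=
      hζ.pow_ne_one_of_pos_of_lt (by omega) (lt_of_le_of_lt h2 (Nat.sub_lt hℓ.pos one_pos))
    simpa [E, sub_ne_zero, PowerSeries.constantCoeff_exp] using this
  refine ⟨hnz, ?_⟩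
  -- nonzero cofactors
  have hE1 : E - 1 ≠ 0 := by
    intro h
    have := congrArg (PowerSeries.coeff 1) h
    simp [E, PowerSeries.coeff_exp] at this
  have hEl : E ^ ℓ - 1 ≠ 0 := by
    intro h
    have := congrArg (PowerSeries.coeff 1) h
    rw [hE, PowerSeries.exp_pow_eq_rescale_exp] at this
    simp [PowerSeries.coeff_rescale, PowerSeries.coeff_exp, hℓ0] at this
  -- key per-term factorization
  have key : ∀ a ∈ Finset.Icc 1 (ℓ - 1),
      (PowerSeries.C (ζ ^ a) - E)⁻¹ * (E ^ ℓ - 1)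
        = -∑ i ∈ Finset.range ℓ, E ^ i * (PowerSeries.C (ζ ^ a)) ^ (ℓ - 1 - i) := by
    intro a ha
    have hCl : (PowerSeries.C (ζ ^ a)) ^ ℓ = 1 := by
      rw [← map_pow, ← pow_mul, mul_comm, pow_mul, hζ.pow_eq_one, one_pow, map_one]
    have hfact : (E ^ ℓ - 1)
        = -(∑ i ∈ Finset.range ℓ, E ^ i * (PowerSeries.C (ζ ^ a)) ^ (ℓ - 1 - i))
          * (PowerSeries.C (ζ ^ a) - E) := by
      have h2 := geom_sum₂_mul E (PowerSeries.C (ζ ^ a)) ℓ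
      rw [hCl] at h2
      linear_combination -h2
    rw [hfact, mul_comm, mul_assoc, PowerSeries.mul_inv_cancel _ (hnz a ha), mul_one]
  -- root-of-unity sums
  have hroot : ∀ i ∈ Finset.range ℓ, ∑ a ∈ Finset.Icc 1 (ℓ - 1), ζ ^ (a * (ℓ - i))
      = if i = 0 then (ℓ : ℂ) - 1 else -1 := by
    intro i hi
    rw [Finset.mem_range] at hi
    have hIcc : Finset.Icc 1 (ℓ - 1) = Finset.Ico 1 ℓ := by
      rw [← Finset.Ico_add_one_right_eq_Icc]; congr 1; omega
    have hrw : ∀ a : ℕ, ζ ^ (a * (ℓ - i)) = (ζ ^ (ℓ - i)) ^ a := by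
      intro a; rw [mul_comm, pow_mul]
    have hfull : ∑ a ∈ Finset.range ℓ, (ζ ^ (ℓ - i)) ^ a = if i = 0 then (ℓ : ℂ) else 0 := by
      rcases eq_or_ne i 0 with rfl | hi0
      · simp [hζ.pow_eq_one]
      · have h1 : ζ ^ (ℓ - i) ≠ 1 :=
          hζ.pow_ne_one_of_pos_of_lt (Nat.sub_pos_of_lt hi).ne'
            (Nat.sub_lt hℓ.pos (Nat.pos_of_ne_zero hi0))
        rw [geom_sum_eq h1, ← pow_mul, mul_comm, pow_mul, hζ.pow_eq_one, one_pow, sub_self,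
          zero_div, if_neg hi0]
    have hsplit : ∑ a ∈ Finset.range ℓ, (ζ ^ (ℓ - i)) ^ a
        = (∑ a ∈ Finset.Icc 1 (ℓ - 1), (ζ ^ (ℓ - i)) ^ a) + 1 := by
      rw [hIcc, Finset.range_eq_Ico, Finset.sum_eq_sum_Ico_succ_bot hℓ.pos]
      ring
    simp only [hrw]
    have hfin := hsplit ▸ hfull
    rcases eq_or_ne i 0 with rfl | hi0
    · simp only [if_pos] at hfin ⊢; linear_combination hfin
    · simp only [if_neg hi0] at hfin ⊢; linear_combination hfin
  -- main sum computation
  have hS : (∑ a ∈ Finset.Icc 1 (ℓ - 1),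
        PowerSeries.C (ζ ^ a) * (PowerSeries.C (ζ ^ a) - E)⁻¹) * (E ^ ℓ - 1)
      = (∑ k ∈ Finset.range ℓ, E ^ k) - PowerSeries.C (ℓ : ℂ) := by
    rw [Finset.sum_mul]
    have step1 : ∀ a ∈ Finset.Icc 1 (ℓ - 1),
        PowerSeries.C (ζ ^ a) * (PowerSeries.C (ζ ^ a) - E)⁻¹ * (E ^ ℓ - 1)
        = -∑ i ∈ Finset.range ℓ, E ^ i * PowerSeries.C (ζ ^ (a * (ℓ - i))) := by
      intro a ha
      rw [mul_assoc, key a ha, mul_neg, Finset.mul_sum, neg_inj]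
      refine Finset.sum_congr rfl fun i hi => ?_
      rw [Finset.mem_range] at hi
      have h' : a * (ℓ - 1 - i) + a = a * (ℓ - i) := by
        have : (ℓ - 1 - i) + 1 = ℓ - i := by omega
        rw [← this, Nat.mul_succ]
      rw [← map_pow, ← pow_mul, ← h', pow_add, map_mul]
      ring
    rw [Finset.sum_congr rfl step1, Finset.sum_neg_distrib, Finset.sum_comm]
    have step2 : ∀ i ∈ Finset.range ℓ,
        ∑ a ∈ Finset.Icc 1 (ℓ - 1), E ^ i * PowerSeries.C (ζ ^ (a * (ℓ - i)))
        = E ^ i * PowerSeries.C (if i = 0 then (ℓ : ℂ) - 1 else -1) := by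
      intro i hi
      rw [← Finset.mul_sum, ← map_sum, hroot i hi]
    rw [Finset.sum_congr rfl step2]
    rw [Finset.range_eq_Ico, Finset.sum_eq_sum_Ico_succ_bot hℓ.pos,
        Finset.sum_eq_sum_Ico_succ_bot hℓ.pos]
    have step3 : ∀ i ∈ Finset.Ico 1 ℓ,
        E ^ i * PowerSeries.C (if i = 0 then (ℓ : ℂ) - 1 else -1) = -E ^ i := by
      intro i hi
      rw [Finset.mem_Ico] at hi
      rw [if_neg (by omega), map_neg, map_one]
      ring
    rw [Finset.sum_congr rfl step3, if_pos rfl, Finset.sum_neg_distrib, map_sub, map_one]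
    ring
  -- bernoulli power series facts
  have hB := bernoulliPowerSeries_mul_exp_sub_one ℂ
  have hB2 : rescale (ℓ : ℂ) (bernoulliPowerSeries ℂ) * (E ^ ℓ - 1)
      = PowerSeries.C (ℓ : ℂ) * PowerSeries.X := by
    have := congrArg (rescale (ℓ : ℂ)) hB
    rw [map_mul, map_sub, map_one, rescale_X] at this
    rw [hE, PowerSeries.exp_pow_eq_rescale_exp]
    exact this
  have hRHS : (PowerSeries.mk
        (fun n => (1 - (ℓ : ℂ) ^ n) * ((bernoulli n : ℚ) : ℂ) / n.factorial) : PowerSeries ℂ)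
      = bernoulliPowerSeries ℂ - rescale (ℓ : ℂ) (bernoulliPowerSeries ℂ) := by
    ext n
    simp only [PowerSeries.coeff_mk, map_sub, PowerSeries.coeff_rescale, bernoulliPowerSeries,
      PowerSeries.coeff_mk, eq_ratCast, Rat.cast_div]
    push_cast
    ring
  -- geometric sum
  have hgeom : (∑ k ∈ Finset.range ℓ, E ^ k) * (E - 1) = E ^ ℓ - 1 := geom_sum_mul E ℓ
  -- final assembly via cancellation
  rw [hRHS]
  apply mul_right_cancel₀ (b := (E - 1) * (E ^ ℓ - 1)) (mul_ne_zero hE1 hEl)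
  linear_combination (PowerSeries.X * (E - 1)) * hS + PowerSeries.X * hgeom
    - (E ^ ℓ - 1) * hB + (E - 1) * hB2
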